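/- Near $+1$ the arc-cosine kernel of order 1 satisfies the expansion $\kappa_1(1-t) = 1 - t + \frac{2\sqrt{2}}{3\pi}t^{3/2} + O(t^{5/2})$ as $t \to 0^+$. -/

import Mathlib

open Real Asymptotics Set intervalIntegral


lemma arccos_anti : Antitone Real.arccos := by
  intro a b h
  unfold Real.arccos
  have := Real.monotone_arcsin h
  linarith

lemma rpow_three_halves {x : ℝ} (hx : 0 ≤ x) : x ^ ((3:ℝ)/2) = x * Real.sqrt x := by
  rw [show (3:ℝ)/2 = 1 + 1/2 by norm_num, Real.rpow_add' hx (by norm_num), Real.rpow_one,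
    ← Real.sqrt_eq_rpow]

lemma rpow_five_halves {x : ℝ} (hx : 0 ≤ x) : x ^ ((5:ℝ)/2) = x ^ 2 * Real.sqrt x := by
  rw [show (5:ℝ)/2 = 2 + 1/2 by norm_num, Real.rpow_add' hx (by norm_num),
    ← Real.sqrt_eq_rpow, show ((2:ℝ):ℝ) = ((2:ℕ):ℝ) by norm_num, Real.rpow_natCast]

lemma arccos_lb {s : ℝ} (hs : 0 ≤ s) (hs' : s ≤ 1/100) :
    Real.sqrt (2*s) ≤ Real.arccos (1 - s) := by
  have h2s : (0:ℝ) ≤ 2*s := by linarith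
  have hsq : Real.sqrt (2*s) ^ 2 = 2*s := Real.sq_sqrt h2s
  have hcos : 1 - s ≤ Real.cos (Real.sqrt (2*s)) := by
    have := Real.one_sub_sq_div_two_le_cos (x := Real.sqrt (2*s))
    rw [hsq] at this; linarith
  have hle1 : Real.sqrt (2*s) ≤ 1 := Real.sqrt_le_one.mpr (by linarith)
  have hpi : Real.sqrt (2*s) ≤ π := le_trans hle1 (by linarith [Real.pi_gt_three])
  calc Real.sqrt (2*s) = Real.arccos (Real.cos (Real.sqrt (2*s))) :=
        (Real.arccos_cos (Real.sqrt_nonneg _) hpi).symm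
    _ ≤ Real.arccos (1 - s) := arccos_anti hcos

lemma arccos_ub {s : ℝ} (hs : 0 ≤ s) (hs' : s ≤ 1/100) :
    Real.arccos (1 - s) ≤ Real.sqrt (2*s) + 3 * (s * Real.sqrt s) := by
  set q := Real.sqrt s with hqdef
  have hq : 0 ≤ q := Real.sqrt_nonneg s
  have hq2 : q ^ 2 = s := Real.sq_sqrt hs
  have hq1 : q ≤ 1/10 := by nlinarith
  have h2s : Real.sqrt (2*s) = Real.sqrt 2 * q := by
    rw [hqdef, ← Real.sqrt_mul (by norm_num)]
  set r := Real.sqrt 2 with hrdef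
  have hr : 0 ≤ r := Real.sqrt_nonneg 2
  have hr2 : r ^ 2 = 2 := Real.sq_sqrt (by norm_num)
  have hr14 : 1.41 ≤ r ∧ r ≤ 1.42 := by constructor <;> nlinarith
  set y := r * q + 3 * q ^ 3 with hydef
  have hy0 : 0 ≤ y := by positivity
  have hy45 : y ≤ 1.45 * q := by nlinarith [hr14.2, pow_nonneg hq 2]
  have hy1 : |y| ≤ 1 := by rw [abs_of_nonneg hy0]; nlinarith
  have hyπ : y ≤ π := by nlinarith [Real.pi_gt_three]
  have hy4 : y ^ 4 ≤ (1.45) ^ 4 * q ^ 4 := by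
    calc y ^ 4 ≤ (1.45 * q) ^ 4 := pow_le_pow_left₀ hy0 hy45 4
      _ = (1.45)^4 * q ^ 4 := by ring
  have hcb := Real.cos_bound hy1
  rw [abs_of_nonneg hy0] at hcb
  have hcos : Real.cos y ≤ 1 - y^2/2 + y^4 * (5/96) := by
    have := abs_le.mp hcb; linarith [this.2]
  clear_value y r q
  have hkey : Real.cos y ≤ 1 - s := by
    have h1 : y^2 = 2*q^2 + 6*r*q^4 + 9*q^6 := by rw [hydef]; linear_combination q^2 * hr2
    have hrq4 : 1.41 * q^4 ≤ r * q^4 :=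
      mul_le_mul_of_nonneg_right hr14.1 (pow_nonneg hq 4)
    have hy4' : y^4 ≤ 4.42050625 * q^4 := by
      have : (1.45:ℝ)^4 = 4.42050625 := by norm_num
      linarith [hy4]
    have hq6 : (0:ℝ) ≤ q^6 := pow_nonneg hq 6
    have hq4 : (0:ℝ) ≤ q^4 := pow_nonneg hq 4
    have : 1 - y^2/2 + y^4 * (5/96) ≤ 1 - q^2 := by linarith
    linarith [hq2.symm ▸ this, hcos]
  have : Real.arccos (1 - s) ≤ Real.arccos (Real.cos y) := arccos_anti hkey
  rw [Real.arccos_cos hy0 hyπ] at this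
  rw [h2s]
  have hq3 : s * q = q ^ 3 := by linear_combination (-q) * hq2
  rw [hq3]; linarith

lemma contA : Continuous (fun s : ℝ => Real.arccos (1 - s)) :=
  Real.continuous_arccos.comp (continuous_const.sub continuous_id)

lemma ftc_g {t : ℝ} (ht : 0 < t) (ht' : t ≤ 1/100) :
    (1 - t) * Real.arccos (1 - t) - Real.sqrt (2*t - t^2) =
      -∫ s in (0:ℝ)..t, Real.arccos (1 - s) := by
  have hcont : ContinuousOn
      (fun y : ℝ => (1 - y) * Real.arccos (1 - y) - Real.sqrt (2*y - y^2)) (Icc 0 t) := by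
    apply Continuous.continuousOn
    apply Continuous.sub
    · exact (continuous_const.sub continuous_id).mul contA
    · exact Real.continuous_sqrt.comp (by continuity)
  have hderiv : ∀ x ∈ Ioo (0:ℝ) t,
      HasDerivAt (fun y : ℝ => (1 - y) * Real.arccos (1 - y) - Real.sqrt (2*y - y^2))
        (-Real.arccos (1 - x)) x := by
    intro x hx
    obtain ⟨hx0, hxt⟩ := hx
    have hx1 : x < 1 := by linarith
    have hSpos : 0 < 2*x - x^2 := by nlinarith
    have hin1 : HasDerivAt (fun y : ℝ => 1 - y) (-1) x := by
      simpa using (hasDerivAt_id x).const_sub 1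
    have hA : HasDerivAt (fun y : ℝ => Real.arccos (1 - y))
        (1 / Real.sqrt (1 - (1-x)^2)) x := by
      have h := (Real.hasDerivAt_arccos (show (1:ℝ) - x ≠ -1 by linarith)
        (show (1:ℝ) - x ≠ 1 by linarith)).comp x hin1
      refine h.congr_deriv ?_
      ring
    have hin2 : HasDerivAt (fun y : ℝ => 2*y - y^2) (2 - 2*x) x := by
      have h := ((hasDerivAt_id x).const_mul (2:ℝ)).sub (hasDerivAt_pow 2 x)
      refine h.congr_deriv ?_
      norm_num
    have hS : HasDerivAt (fun y : ℝ => Real.sqrt (2*y - y^2))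
        ((2 - 2*x) / (2 * Real.sqrt (2*x - x^2))) x := by
      have h := (Real.hasDerivAt_sqrt (ne_of_gt hSpos)).comp x hin2
      refine h.congr_deriv ?_
      ring
    have h := (hin1.mul hA).sub hS
    refine h.congr_deriv ?_
    have harg : (1:ℝ) - (1-x)^2 = 2*x - x^2 := by ring
    rw [harg]
    have hSne : Real.sqrt (2*x - x^2) ≠ 0 := by positivity
    field_simp
    ring
  have hint : IntervalIntegrable (fun s : ℝ => -Real.arccos (1 - s))
      MeasureTheory.volume 0 t := contA.neg.intervalIntegrable 0 t
  have := intervalIntegral.integral_eq_sub_of_hasDerivAt_of_le (le_of_lt ht) hcont hderiv hint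
  rw [intervalIntegral.integral_neg] at this
  have h0 : (1 - (0:ℝ)) * Real.arccos (1 - 0) - Real.sqrt (2*0 - 0^2) = 0 := by
    norm_num [Real.arccos_one]
  simp only [h0] at this
  linarith [this]


lemma intJ1 {t : ℝ} (ht : 0 ≤ t) :
    ∫ s in (0:ℝ)..t, Real.sqrt (2*s) = 2 * Real.sqrt 2 / 3 * (t * Real.sqrt t) := by
  have h : ∀ s : ℝ, Real.sqrt (2*s) = Real.sqrt 2 * s ^ ((1:ℝ)/2) := by
    intro s
    rw [Real.sqrt_mul (by norm_num : (0:ℝ) ≤ 2), Real.sqrt_eq_rpow s]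
  simp only [h]
  rw [intervalIntegral.integral_const_mul, integral_rpow (Or.inl (by norm_num))]
  rw [show (1:ℝ)/2 + 1 = (3:ℝ)/2 by norm_num, Real.zero_rpow (by norm_num),
    rpow_three_halves ht]
  ring

lemma intJ2 {t : ℝ} (ht : 0 ≤ t) :
    ∫ s in (0:ℝ)..t, 3 * (s * Real.sqrt s) = 6/5 * (t^2 * Real.sqrt t) := by
  have h : ∀ s ∈ uIcc (0:ℝ) t, (fun s : ℝ => 3 * (s * Real.sqrt s)) s
      = (fun s : ℝ => 3 * s ^ ((3:ℝ)/2)) s := by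
    intro s hs
    rw [uIcc_of_le ht] at hs
    simp only
    rw [rpow_three_halves hs.1]
  rw [intervalIntegral.integral_congr h]
  rw [intervalIntegral.integral_const_mul, integral_rpow (Or.inl (by norm_num))]
  rw [show (3:ℝ)/2 + 1 = (5:ℝ)/2 by norm_num, Real.zero_rpow (by norm_num),
    rpow_five_halves ht]
  ring

noncomputable def kappa1 (u : ℝ) : ℝ := (u * (π - Real.arccos u) + Real.sqrt (1 - u ^ 2)) / π

theorem kappa1_expansion_near_one :
    (fun t : ℝ => kappa1 (1 - t) -
        (1 - t + 2 * Real.sqrt 2 / (3 * π) * t ^ ((3 : ℝ) / 2)))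
      =O[nhdsWithin 0 (Set.Ioi 0)] (fun t : ℝ => t ^ ((5 : ℝ) / 2)) := by
  rw [Asymptotics.isBigO_iff]
  refine ⟨1, ?_⟩
  filter_upwards [Ioo_mem_nhdsGT_of_mem (show (0:ℝ) ∈ Set.Ico 0 (1/100) by norm_num)] with t ht
  obtain ⟨ht0, ht1⟩ := ht
  have ht0' : (0:ℝ) ≤ t := le_of_lt ht0
  have ht1' : t ≤ 1/100 := le_of_lt ht1
  set I := ∫ s in (0:ℝ)..t, Real.arccos (1 - s) with hIdef
  have hintA : IntervalIntegrable (fun s : ℝ => Real.arccos (1 - s))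
      MeasureTheory.volume 0 t := contA.intervalIntegrable 0 t
  have hint1 : IntervalIntegrable (fun s : ℝ => Real.sqrt (2*s))
      MeasureTheory.volume 0 t :=
    (Real.continuous_sqrt.comp (continuous_const.mul continuous_id)).intervalIntegrable 0 t
  have hint2 : IntervalIntegrable (fun s : ℝ => 3 * (s * Real.sqrt s))
      MeasureTheory.volume 0 t :=
    (continuous_const.mul (continuous_id.mul Real.continuous_sqrt)).intervalIntegrable 0 t
  have hlb : 2 * Real.sqrt 2 / 3 * (t * Real.sqrt t) ≤ I := by
    rw [← intJ1 ht0']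
    exact intervalIntegral.integral_mono_on ht0' hint1 hintA
      (fun s hs => arccos_lb hs.1 (le_trans hs.2 ht1'))
  have hub : I ≤ 2 * Real.sqrt 2 / 3 * (t * Real.sqrt t) + 6/5 * (t^2 * Real.sqrt t) := by
    rw [← intJ1 ht0', ← intJ2 ht0', ← intervalIntegral.integral_add hint1 hint2]
    exact intervalIntegral.integral_mono_on ht0' hintA (hint1.add hint2)
      (fun s hs => arccos_ub hs.1 (le_trans hs.2 ht1'))
  have hA := ftc_g ht0 ht1'
  have h2 : Real.sqrt (2*t - t^2) - (1 - t) * Real.arccos (1 - t) = I := by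
    rw [← hIdef] at hA; linarith
  have hval : kappa1 (1 - t) - (1 - t + 2 * Real.sqrt 2 / (3 * π) * t ^ ((3:ℝ)/2))
      = (I - 2 * Real.sqrt 2 / 3 * (t * Real.sqrt t)) / π := by
    unfold kappa1
    rw [show (1:ℝ) - (1 - t)^2 = 2*t - t^2 by ring, rpow_three_halves ht0', ← h2]
    have hπ : π ≠ 0 := Real.pi_ne_zero
    field_simp
    ring
  have hX : (0:ℝ) ≤ t^2 * Real.sqrt t := by positivity
  have hnum : |I - 2 * Real.sqrt 2 / 3 * (t * Real.sqrt t)| ≤ 6/5 * (t^2 * Real.sqrt t) :=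
    abs_le.mpr ⟨by linarith, by linarith⟩
  rw [Real.norm_eq_abs, Real.norm_eq_abs, hval, rpow_five_halves ht0', one_mul,
    abs_of_nonneg hX, abs_div, abs_of_nonneg Real.pi_pos.le, div_le_iff₀ Real.pi_pos]
  nlinarith [Real.pi_gt_three, hnum, hX, abs_nonneg (I - 2 * Real.sqrt 2 / 3 * (t * Real.sqrt t))]
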